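/- Let W, U, Z be finitely-valued random variables with W − U − Z and U − W − Z both Markov chains, and let U₀ be the zero-information random variable of W with respect to P_{Z|W} (i.e., U₀ is the equivalence class of W under the relation w₁ ∼ w₂ iff P_{Z|W}(·|w₁) = P_{Z|W}(·|w₂)). Then U₀ is a deterministic function of U almost surely. -/
import Mathlib


open Finset

section PD
variable {Ω α β γ : Type*}

open Classical in
/-- Pushforward distribution of `p` under the random variable `f`. -/
noncomputable def push [Fintype Ω] (p : Ω → ℝ) (f : Ω → α) : α → ℝ :=
  fun a => ∑ ω, if f ω = a then p ω else 0

/-- Shannon entropy (base 2) of a pmf on a finite alphabet. -/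
noncomputable def ent [Fintype α] (q : α → ℝ) : ℝ := -∑ a, q a * Real.logb 2 (q a)

/-- Entropy of a random variable `f` under the distribution `p` on the sample space. -/
noncomputable def H [Fintype Ω] [Fintype α] (p : Ω → ℝ) (f : Ω → α) : ℝ := ent (push p f)

/-- Conditional entropy `H(f | g)`. -/
noncomputable def condH [Fintype Ω] [Fintype α] [Fintype β] (p : Ω → ℝ) (f : Ω → α) (g : Ω → β) : ℝ :=
  H p (fun ω => (f ω, g ω)) - H p g

/-- Mutual information `I(f ; g)`. -/
noncomputable def mi [Fintype Ω] [Fintype α] [Fintype β] (p : Ω → ℝ) (f : Ω → α) (g : Ω → β) : ℝ :=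
  H p f + H p g - H p (fun ω => (f ω, g ω))

/-- Conditional mutual information `I(f ; g | h)`. -/
noncomputable def cmi [Fintype Ω] [Fintype α] [Fintype β] [Fintype γ]
    (p : Ω → ℝ) (f : Ω → α) (g : Ω → β) (h : Ω → γ) : ℝ :=
  condH p f h + condH p g h - condH p (fun ω => (f ω, g ω)) h

/-- `p` is a probability mass function. -/
def IsProb [Fintype Ω] (p : Ω → ℝ) : Prop := (∀ ω, 0 ≤ p ω) ∧ ∑ ω, p ω = 1

/-- Markov chain `f − g − h`: conditional independence of `f` and `h` given `g`,
expressed as `P(a,b,c)·P(b) = P(a,b)·P(b,c)`. -/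
def Markov [Fintype Ω] (p : Ω → ℝ) (f : Ω → α) (g : Ω → β) (h : Ω → γ) : Prop :=
  ∀ a b c, push p (fun ω => (f ω, g ω, h ω)) (a, b, c) * push p g b =
    push p (fun ω => (f ω, g ω)) (a, b) * push p (fun ω => (g ω, h ω)) (b, c)

open Classical in
/-- Kullback–Leibler divergence (base 2), with the sum restricted to the support of `P`. -/
noncomputable def KL [Fintype α] (P Q : α → ℝ) : ℝ :=
  ∑ a, if 0 < P a then P a * Real.logb 2 (P a / Q a) else 0

end PD

/-- The zero-information equivalence: `w₁ ∼ w₂` iff the conditional laws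
`c w₁ = P_{Z|W}(·|w₁)` and `c w₂` coincide. -/
def zeroInfoSetoid {W Z : Type*} (c : W → Z → ℝ) : Setoid W :=
  ⟨fun w₁ w₂ => ∀ z, c w₁ z = c w₂ z,
   ⟨fun _ _ => rfl, fun h z => (h z).symm, fun h₁ h₂ z => (h₁ z).trans (h₂ z)⟩⟩

lemma push_nonneg' {Ω α : Type*} [Fintype Ω] (p : Ω → ℝ) (hp : ∀ ω, 0 ≤ p ω)
    (f : Ω → α) (a : α) : 0 ≤ push p f a := by
  unfold push
  exact Finset.sum_nonneg fun ω _ => by split <;> simp [hp ω]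

lemma push_pos' {Ω α : Type*} [Fintype Ω] (p : Ω → ℝ) (hp : ∀ ω, 0 ≤ p ω)
    (f : Ω → α) (ω : Ω) (hω : 0 < p ω) : 0 < push p f (f ω) := by
  unfold push
  refine Finset.sum_pos' (fun ω' _ => by split <;> simp [hp ω']) ⟨ω, Finset.mem_univ ω, by simp [hω]⟩

lemma push_congr' {Ω α β : Type*} [Fintype Ω] (p : Ω → ℝ) (f : Ω → α) (g : Ω → β) (a : α) (b : β)
    (h : ∀ ω, f ω = a ↔ g ω = b) : push p f a = push p g b := by
  unfold push
  exact Finset.sum_congr rfl fun ω _ => by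
    by_cases hf : f ω = a
    · rw [if_pos hf, if_pos ((h ω).mp hf)]
    · rw [if_neg hf, if_neg (fun hg => hf ((h ω).mpr hg))]

lemma zero_info_key {Ω W U Z : Type*}
    [Fintype Ω] [Fintype W] [Fintype U] [Fintype Z]
    (p : Ω → ℝ) (hp : IsProb p)
    (fW : Ω → W) (fU : Ω → U) (fZ : Ω → Z)
    (hWUZ : Markov p fW fU fZ) (hUWZ : Markov p fU fW fZ)
    (c : W → Z → ℝ)
    (hc : ∀ w z, c w z = push p (fun ω => (fW ω, fZ ω)) (w, z) / push p fW w)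
    (ω : Ω) (hω : 0 < p ω) (z : Z) :
    c (fW ω) z = push p (fun ω => (fU ω, fZ ω)) (fU ω, z) / push p fU (fU ω) := by
  set w := fW ω
  set u := fU ω
  have hw : 0 < push p fW w := push_pos' p hp.1 fW ω hω
  have hu : 0 < push p fU u := push_pos' p hp.1 fU ω hω
  have huw : 0 < push p (fun ω => (fU ω, fW ω)) (u, w) :=
    push_pos' p hp.1 (fun ω => (fU ω, fW ω)) ω hω
  have eq1 := hUWZ u w z
  have eq2 := hWUZ w u z
  have hswap1 : push p (fun ω => (fW ω, fU ω, fZ ω)) (w, u, z)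
      = push p (fun ω => (fU ω, fW ω, fZ ω)) (u, w, z) :=
    push_congr' p _ _ _ _ fun ω => by simp [Prod.ext_iff]; tauto
  have hswap2 : push p (fun ω => (fW ω, fU ω)) (w, u)
      = push p (fun ω => (fU ω, fW ω)) (u, w) :=
    push_congr' p _ _ _ _ fun ω => by simp [Prod.ext_iff]; tauto
  rw [hswap1, hswap2] at eq2
  rw [hc, div_eq_div_iff hw.ne' hu.ne']
  have hcancel : push p (fun ω => (fW ω, fZ ω)) (w, z) * push p fU u
        * push p (fun ω => (fU ω, fW ω)) (u, w)
      = push p (fun ω => (fU ω, fZ ω)) (u, z) * push p fW w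
        * push p (fun ω => (fU ω, fW ω)) (u, w) := by
    linear_combination push p fW w * eq2 - push p fU u * eq1
  exact mul_right_cancel₀ huw.ne' hcancel

/-- if `W − U − Z` and `U − W − Z` are both Markov chains, then the
zero-information variable `U₀` of `W` w.r.t. `P_{Z|W}` (the equivalence class of `W`)
is almost surely a deterministic function of `U`. -/
theorem zero_info_function_of_U {Ω W U Z : Type*}
    [Fintype Ω] [Fintype W] [Fintype U] [Fintype Z]
    (p : Ω → ℝ) (hp : IsProb p)
    (fW : Ω → W) (fU : Ω → U) (fZ : Ω → Z)
    (hWUZ : Markov p fW fU fZ) (hUWZ : Markov p fU fW fZ)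
    (c : W → Z → ℝ)
    (hc : ∀ w z, c w z = push p (fun ω => (fW ω, fZ ω)) (w, z) / push p fW w) :
    ∃ g : U → Quotient (zeroInfoSetoid c),
      ∀ ω : Ω, 0 < p ω → g (fU ω) = Quotient.mk (zeroInfoSetoid c) (fW ω) := by
  classical
  have hex : ∃ ω, 0 < p ω := by
    by_contra h
    push_neg at h
    have : ∀ ω, p ω = 0 := fun ω => le_antisymm (h ω) (hp.1 ω)
    have h2 := hp.2
    rw [Finset.sum_congr rfl fun ω _ => this ω] at h2
    simp at h2
  haveI : Nonempty W := ⟨fW hex.choose⟩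
  refine ⟨fun u => if h : ∃ ω, 0 < p ω ∧ fU ω = u
      then Quotient.mk (zeroInfoSetoid c) (fW h.choose)
      else Quotient.mk (zeroInfoSetoid c) (Classical.arbitrary W), ?_⟩
  intro ω hω
  have h : ∃ ω', 0 < p ω' ∧ fU ω' = fU ω := ⟨ω, hω, rfl⟩
  simp only [dif_pos h]
  apply Quotient.sound
  intro z
  have h1 := zero_info_key p hp fW fU fZ hWUZ hUWZ c hc h.choose h.choose_spec.1 z
  have h2 := zero_info_key p hp fW fU fZ hWUZ hUWZ c hc ω hω z
  rw [h1, h2, h.choose_spec.2]
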